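/- Let M = [[A, B],[B^T, H]] be a symmetric n×n matrix over F_2 partitioned by an index subset J (so H is the J×J block). Let L be the row span of (M | Id_n) in F_2^{2n} with the standard symplectic pairing (e_i, f_j) = δ_{ij}, and let M_J be the composition of the swaps e_j ↔ f_j for j ∈ J. Then the subspace M_J(L) is transverse to (i.e., has zero intersection with) the span E of e_1,...,e_n if and only if H is invertible. -/

import Mathlib

/-- The partial-dual linear map `M_J` on `F_2^{2n}`, swapping the `e_j` and `f_j`
coordinates for every `j ∈ J` and fixing the others. -/
def MJ (n : ℕ) (J : Finset (Fin n)) :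
    ((Fin n → ZMod 2) × (Fin n → ZMod 2)) →ₗ[ZMod 2]
      ((Fin n → ZMod 2) × (Fin n → ZMod 2)) where
  toFun x := (fun k => if k ∈ J then x.2 k else x.1 k,
              fun k => if k ∈ J then x.1 k else x.2 k)
  map_add' x y := by
    refine Prod.ext ?_ ?_ <;> funext k <;> by_cases h : k ∈ J <;> simp [h]
  map_smul' c x := by
    refine Prod.ext ?_ ?_ <;> funext k <;> by_cases h : k ∈ J <;> simp [h]

/-- Cohn–Lempel in L-space form: let `L` be the row span of `(M | Id_n)`
for a symmetric matrix `M`, and `J` a set of indices. Then `M_J(L)` is transverse to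
`E = span(e_1,…,e_n)` (zero intersection) iff the `J×J` submatrix `H` of `M` is invertible. -/
lemma sum_restrict {n : ℕ} (J : Finset (Fin n)) (c : Fin n → ZMod 2)
    (hc : ∀ i ∉ J, c i = 0) (g : Fin n → ZMod 2) :
    ∑ i, c i * g i = ∑ a : J, c a.1 * g a.1 := by
  rw [Finset.univ_eq_attach, Finset.sum_attach J (fun i => c i * g i)]
  exact (Finset.sum_subset J.subset_univ (fun i _ hi => by rw [hc i hi, zero_mul])).symm

theorem stmt10 (n : ℕ) (M : Matrix (Fin n) (Fin n) (ZMod 2)) (hM : M.IsSymm)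
    (J : Finset (Fin n)) :
    let r : Fin n → (Fin n → ZMod 2) × (Fin n → ZMod 2) := fun i => (M i, Pi.single i 1)
    let L := Submodule.span (ZMod 2) (Set.range r)
    let Esub := LinearMap.range (LinearMap.inl (ZMod 2) (Fin n → ZMod 2) (Fin n → ZMod 2))
    let H : Matrix J J (ZMod 2) := fun a b => M a.1 b.1
    L.map (MJ n J) ⊓ Esub = ⊥ ↔ IsUnit H := by
  intro r L Esub H
  have hsum : ∀ c : Fin n → ZMod 2, (∑ i, c i • r i) = (Matrix.vecMul c M, c) := by
    intro c
    refine Prod.ext ?_ ?_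
    · funext k
      simp [r, Matrix.vecMul, dotProduct, Prod.fst_sum, Finset.sum_apply]
    · funext k
      simp [r, Prod.snd_sum, Finset.sum_apply, Pi.single_apply, mul_comm]
  have hE : ∀ x : (Fin n → ZMod 2) × (Fin n → ZMod 2), x ∈ Esub ↔ x.2 = 0 := by
    intro x
    constructor
    · rintro ⟨a, rfl⟩; rfl
    · intro h; exact ⟨x.1, Prod.ext rfl h.symm⟩
  have hvec : ∀ c : Fin n → ZMod 2, (∀ i ∉ J, c i = 0) →
      ∀ k : J, Matrix.vecMul (fun a : J => c a.1) H k = Matrix.vecMul c M k.1 := by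
    intro c hc k
    simp only [Matrix.vecMul, dotProduct, H]
    rw [sum_restrict J c hc (fun i => M i k.1)]
  constructor
  · -- transverse → IsUnit H
    intro hbot
    by_contra hH
    have hdet : H.det = 0 := by
      by_contra hd
      exact hH ((Matrix.isUnit_iff_isUnit_det H).mpr (isUnit_iff_ne_zero.mpr hd))
    obtain ⟨d, hd0, hdH⟩ := Matrix.exists_vecMul_eq_zero_iff.mpr hdet
    set c : Fin n → ZMod 2 := fun i => if h : i ∈ J then d ⟨i, h⟩ else 0 with hcdef
    have hc : ∀ i ∉ J, c i = 0 := fun i hi => dif_neg hi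
    have hcd : (fun a : J => c a.1) = d := by
      funext a; simp [hcdef, a.2]
    have hmem : MJ n J (Matrix.vecMul c M, c) ∈ L.map (MJ n J) ⊓ Esub := by
      refine Submodule.mem_inf.mpr ⟨Submodule.mem_map_of_mem ?_, ?_⟩
      · exact (Submodule.mem_span_range_iff_exists_fun (ZMod 2)).mpr ⟨c, hsum c⟩
      · rw [hE]
        funext k
        show (if k ∈ J then Matrix.vecMul c M k else c k) = 0
        by_cases h : k ∈ J
        · rw [if_pos h, ← hvec c hc ⟨k, h⟩, hcd]
          exact congrFun hdH ⟨k, h⟩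
        · rw [if_neg h]; exact hc k h
    rw [hbot, Submodule.mem_bot] at hmem
    obtain ⟨a, ha⟩ := Function.ne_iff.mp hd0
    apply ha
    have h2 := congrFun (congrArg Prod.fst hmem) a.1
    simp only [MJ, LinearMap.coe_mk, AddHom.coe_mk, if_pos a.2, Prod.fst_zero, Pi.zero_apply] at h2
    rw [← hcd]
    exact h2
  · -- IsUnit H → transverse
    intro hH
    rw [Submodule.eq_bot_iff]
    rintro x hx
    obtain ⟨hxL, hxE⟩ := Submodule.mem_inf.mp hx
    obtain ⟨y, hyL, rfl⟩ := Submodule.mem_map.mp hxL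
    obtain ⟨c, rfl⟩ := (Submodule.mem_span_range_iff_exists_fun (ZMod 2)).mp hyL
    rw [hE] at hxE
    rw [hsum c] at hxE ⊢
    have hxE' : ∀ k, (if k ∈ J then Matrix.vecMul c M k else c k) = 0 := fun k => congrFun hxE k
    have hc : ∀ i ∉ J, c i = 0 := fun i hi => by simpa [hi] using hxE' i
    have hdH : Matrix.vecMul (fun a : J => c a.1) H = 0 := by
      funext k
      rw [hvec c hc k]
      simpa [k.2] using hxE' k.1
    have hd0 : (fun a : J => c a.1) = 0 := by
      have hinv := Matrix.mul_nonsing_inv H ((Matrix.isUnit_iff_isUnit_det H).mp hH)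
      calc (fun a : J => c a.1) = Matrix.vecMul (fun a : J => c a.1) (H * H⁻¹) := by
            rw [hinv, Matrix.vecMul_one]
        _ = Matrix.vecMul (Matrix.vecMul (fun a : J => c a.1) H) H⁻¹ := by
            rw [Matrix.vecMul_vecMul]
        _ = 0 := by rw [hdH, Matrix.zero_vecMul]
    have hc0 : c = 0 := by
      funext i
      by_cases h : i ∈ J
      · exact congrFun hd0 ⟨i, h⟩
      · exact hc i h
    rw [hc0]
    simp [← Prod.zero_eq_mk]
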